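/- arXiv:2011.06568 — 3 statements merged into one kernel-verified Lean document; each statement's English description precedes it below -/
import Mathlib

section
/- Let ε ∈ (0,1) be irrational. A point p ∈ Σ⁵ is a periodic point of the Katok flow (i.e. there exists T > 0 with φ_T(p) = p) if and only if p ∈ C₁ ∪ C₂ ∪ C₃ ∪ C₄. -/
noncomputable section

open Complex

/-- `ℂ⁴` with the Hermitian norm `‖z‖² = Σⱼ |zⱼ|²`. -/
abbrev C4 := EuclideanSpace ℂ (Fin 4)

def toC4 (v : Fin 4 → ℂ) : C4 := (WithLp.equiv 2 (Fin 4 → ℂ)).symm v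

/-- The Katok flow `φ_t(w) = (e^{2πit} w₀, e^{2πit} w₁, e^{2πi(1+ε)t} w₂, e^{2πi(1−ε)t} w₃)`. -/
def katok (ε : ℝ) (t : ℝ) (w : C4) : C4 := toC4
  ![Complex.exp (2 * (Real.pi : ℂ) * Complex.I * (t : ℂ)) * w 0,
    Complex.exp (2 * (Real.pi : ℂ) * Complex.I * (t : ℂ)) * w 1,
    Complex.exp (2 * (Real.pi : ℂ) * Complex.I * ((1 + ε : ℝ) : ℂ) * (t : ℂ)) * w 2,
    Complex.exp (2 * (Real.pi : ℂ) * Complex.I * ((1 - ε : ℝ) : ℂ) * (t : ℂ)) * w 3]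

/-- The Brieskorn quadric link `Σ⁵` in the unitary coordinates of the paper. -/
def Sigma5 : Set C4 := {w | w 0 ^ 2 + w 1 ^ 2 - 2 * Complex.I * w 2 * w 3 = 0 ∧ ‖w‖ = 1}

/-- `C₁ = {(w, i w, 0, 0) : |w| = √2/2}`. -/
def circ1 : Set C4 :=
  {p | ∃ w : ℂ, ‖w‖ = Real.sqrt 2 / 2 ∧ p = toC4 ![w, Complex.I * w, 0, 0]}

/-- `C₂ = {(w, −i w, 0, 0) : |w| = √2/2}`. -/
def circ2 : Set C4 :=
  {p | ∃ w : ℂ, ‖w‖ = Real.sqrt 2 / 2 ∧ p = toC4 ![w, -(Complex.I * w), 0, 0]}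

/-- `C₃ = {(0, 0, w, 0) : |w| = 1}`. -/
def circ3 : Set C4 :=
  {p | ∃ w : ℂ, ‖w‖ = 1 ∧ p = toC4 ![0, 0, w, 0]}

/-- `C₄ = {(0, 0, 0, w) : |w| = 1}`. -/
def circ4 : Set C4 :=
  {p | ∃ w : ℂ, ‖w‖ = 1 ∧ p = toC4 ![0, 0, 0, w]}

lemma exp_two_pi_int (x : ℝ) :
    Complex.exp (2*(Real.pi:ℂ)*Complex.I*(x:ℂ)) = 1 ↔ ∃ n : ℤ, x = n := by
  rw [Complex.exp_eq_one_iff]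
  constructor
  · rintro ⟨n, hn⟩
    refine ⟨n, ?_⟩
    have h2 : (2*(Real.pi:ℂ)*Complex.I) ≠ 0 := by
      have hpi : (Real.pi : ℂ) ≠ 0 := by exact_mod_cast Real.pi_ne_zero
      simp [hpi, Complex.I_ne_zero]
    have h3 : (2*(Real.pi:ℂ)*Complex.I)*(x:ℂ) = (2*(Real.pi:ℂ)*Complex.I)*(n:ℂ) := by
      linear_combination hn
    have := mul_left_cancel₀ h2 h3
    exact_mod_cast this
  · rintro ⟨n, rfl⟩
    exact ⟨n, by push_cast; ring⟩

lemma norm_sum (p : C4) (h : ‖p‖ = 1) :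
    ‖p 0‖^2 + ‖p 1‖^2 + ‖p 2‖^2 + ‖p 3‖^2 = 1 := by
  rw [EuclideanSpace.norm_eq] at h
  have h2 := Real.sqrt_eq_one.mp h
  simpa [Fin.sum_univ_four] using h2

lemma katok_sq_eq_one {a : ℝ} (hn : 0 ≤ a) (h : a^2 = 1) : a = 1 := by
  calc a = Real.sqrt (a^2) := (Real.sqrt_sq hn).symm
  _ = 1 := by rw [h, Real.sqrt_one]

lemma exp_eq_one_of (a t : ℝ) (h : a * t = 1) :
    Complex.exp (2*(Real.pi:ℂ)*Complex.I*((a:ℝ):ℂ)*((t:ℝ):ℂ)) = 1 := by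
  have e : 2*(Real.pi:ℂ)*Complex.I*((a:ℝ):ℂ)*((t:ℝ):ℂ)
      = 2*(Real.pi:ℂ)*Complex.I*(((a*t:ℝ)):ℂ) := by push_cast; ring
  rw [e, h, Complex.ofReal_one, mul_one]
  exact Complex.exp_two_pi_mul_I

lemma sq_eq_half {a : ℝ} (hn : 0 ≤ a) (h : a^2 = 1/2) : a = Real.sqrt 2 / 2 := by
  have h2 : (Real.sqrt 2/2)^2 = (1:ℝ)/2 := by
    rw [div_pow, Real.sq_sqrt (by norm_num : (0:ℝ) ≤ 2)]; norm_num
  calc a = Real.sqrt (a^2) := (Real.sqrt_sq hn).symm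
  _ = Real.sqrt ((Real.sqrt 2/2)^2) := by rw [h, h2]
  _ = Real.sqrt 2 / 2 := Real.sqrt_sq (by positivity)

theorem katok_aux (ε : ℝ) (hε : ε ∈ Set.Ioo (0 : ℝ) 1) (hirr : Irrational ε) :
    ∀ p ∈ ({w : C4 | w 0 ^ 2 + w 1 ^ 2 - 2 * Complex.I * w 2 * w 3 = 0 ∧ ‖w‖ = 1}),
      (∃ T : ℝ, 0 < T ∧ katok ε T p = p) ↔
      (∃ w : ℂ, ‖w‖ = Real.sqrt 2 / 2 ∧ p = toC4 ![w, Complex.I * w, 0, 0]) ∨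
      (∃ w : ℂ, ‖w‖ = Real.sqrt 2 / 2 ∧ p = toC4 ![w, -(Complex.I * w), 0, 0]) ∨
      (∃ w : ℂ, ‖w‖ = 1 ∧ p = toC4 ![0, 0, w, 0]) ∨
      (∃ w : ℂ, ‖w‖ = 1 ∧ p = toC4 ![0, 0, 0, w]) := by
  obtain ⟨hε0, hε1⟩ := hε
  rintro p ⟨hquad, hnorm⟩
  have hsum := norm_sum p hnorm
  have ratlem : ∀ a b : ℤ, (b:ℝ) ≠ 0 → ε * (b:ℝ) = (a:ℝ) → False := by
    intro a b hb h
    have : ε = (((a:ℚ)/(b:ℚ) : ℚ) : ℝ) := by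
      push_cast
      field_simp
      linarith
    exact hirr ⟨_, this.symm⟩
  constructor
  · rintro ⟨T, hT, hfix⟩
    have h0 : Complex.exp (2*(Real.pi:ℂ)*Complex.I*(T:ℂ)) * p 0 = p 0 := by
      have := congrArg (fun q : C4 => q 0) hfix
      simpa [katok, toC4] using this
    have h1 : Complex.exp (2*(Real.pi:ℂ)*Complex.I*(T:ℂ)) * p 1 = p 1 := by
      have := congrArg (fun q : C4 => q 1) hfix
      simpa [katok, toC4] using this
    have h2 : Complex.exp (2*(Real.pi:ℂ)*Complex.I*(((1+ε)*T : ℝ):ℂ)) * p 2 = p 2 := by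
      have := congrArg (fun q : C4 => q 2) hfix
      have e : (2*(Real.pi:ℂ)*Complex.I*(((1+ε)*T : ℝ):ℂ))
          = 2 * (Real.pi : ℂ) * Complex.I * ((1 + ε : ℝ) : ℂ) * (T : ℂ) := by
        push_cast; ring
      rw [e]
      simpa [katok, toC4] using this
    have h3 : Complex.exp (2*(Real.pi:ℂ)*Complex.I*(((1-ε)*T : ℝ):ℂ)) * p 3 = p 3 := by
      have := congrArg (fun q : C4 => q 3) hfix
      have e : (2*(Real.pi:ℂ)*Complex.I*(((1-ε)*T : ℝ):ℂ))
          = 2 * (Real.pi : ℂ) * Complex.I * ((1 - ε : ℝ) : ℂ) * (T : ℂ) := by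
        push_cast; ring
      rw [e]
      simpa [katok, toC4] using this
    have k0 : p 0 ≠ 0 → ∃ n : ℤ, T = n := fun hz =>
      (exp_two_pi_int T).mp (by rcases mul_left_eq_self₀.mp h0 with h | h; exact h; exact absurd h hz)
    have k1 : p 1 ≠ 0 → ∃ n : ℤ, T = n := fun hz =>
      (exp_two_pi_int T).mp (by rcases mul_left_eq_self₀.mp h1 with h | h; exact h; exact absurd h hz)
    have k2 : p 2 ≠ 0 → ∃ n : ℤ, (1+ε)*T = n := fun hz =>
      (exp_two_pi_int _).mp (by rcases mul_left_eq_self₀.mp h2 with h | h; exact h; exact absurd h hz)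
    have k3 : p 3 ≠ 0 → ∃ n : ℤ, (1-ε)*T = n := fun hz =>
      (exp_two_pi_int _).mp (by rcases mul_left_eq_self₀.mp h3 with h | h; exact h; exact absurd h hz)
    by_cases h2z : p 2 = 0
    · by_cases h3z : p 3 = 0
      · -- circle 1 or 2
        have hq : p 0 ^ 2 + p 1 ^ 2 = 0 := by rw [h2z, h3z] at hquad; linear_combination hquad
        have hfact : (p 1 - Complex.I * p 0) * (p 1 + Complex.I * p 0) = 0 := by
          linear_combination hq - (p 0)^2 * Complex.I_sq
        have habs2 : ‖p 0‖^2 + ‖p 1‖^2 = 1 := by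
          rw [h2z, h3z] at hsum; simpa using hsum
        rcases mul_eq_zero.mp hfact with h | h
        · have h' : p 1 = Complex.I * p 0 := sub_eq_zero.mp h
          have h1a : ‖p 1‖ = ‖p 0‖ := by rw [h']; simp
          have habs : ‖p 0‖ = Real.sqrt 2 / 2 :=
            sq_eq_half (norm_nonneg _) (by rw [h1a] at habs2; linarith)
          refine Or.inl ⟨p 0, habs, ?_⟩
          ext i
          fin_cases i <;> simp [toC4, h', h2z, h3z]
        · have h' : p 1 = -(Complex.I * p 0) := by linear_combination h
          have h1a : ‖p 1‖ = ‖p 0‖ := by rw [h']; simp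
          have habs : ‖p 0‖ = Real.sqrt 2 / 2 :=
            sq_eq_half (norm_nonneg _) (by rw [h1a] at habs2; linarith)
          refine Or.inr (Or.inl ⟨p 0, habs, ?_⟩)
          ext i
          fin_cases i <;> simp [toC4, h', h2z, h3z]
      · -- p 3 ≠ 0 : circle 4
        obtain ⟨m, hm⟩ := k3 h3z
        have h0z : p 0 = 0 := by
          by_contra hz
          obtain ⟨n, hn⟩ := k0 hz
          subst hn
          refine ratlem (n - m) n (by positivity) ?_
          push_cast
          linear_combination -hm
        have h1z : p 1 = 0 := by
          by_contra hz
          obtain ⟨n, hn⟩ := k1 hz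
          subst hn
          refine ratlem (n - m) n (by positivity) ?_
          push_cast
          linear_combination -hm
        have habs : ‖p 3‖ = 1 := by
          refine katok_sq_eq_one (norm_nonneg _) ?_
          rw [h0z, h1z, h2z] at hsum; simpa using hsum
        refine Or.inr (Or.inr (Or.inr ⟨p 3, habs, ?_⟩))
        ext i
        fin_cases i <;> simp [toC4, h0z, h1z, h2z]
    · by_cases h3z : p 3 = 0
      · -- p 2 ≠ 0 : circle 3
        obtain ⟨m, hm⟩ := k2 h2z
        have h0z : p 0 = 0 := by
          by_contra hz
          obtain ⟨n, hn⟩ := k0 hz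
          subst hn
          refine ratlem (m - n) n (by positivity) ?_
          push_cast
          linear_combination hm
        have h1z : p 1 = 0 := by
          by_contra hz
          obtain ⟨n, hn⟩ := k1 hz
          subst hn
          refine ratlem (m - n) n (by positivity) ?_
          push_cast
          linear_combination hm
        have habs : ‖p 2‖ = 1 := by
          refine katok_sq_eq_one (norm_nonneg _) ?_
          rw [h0z, h1z, h3z] at hsum; simpa using hsum
        refine Or.inr (Or.inr (Or.inl ⟨p 2, habs, ?_⟩))
        ext i
        fin_cases i <;> simp [toC4, h0z, h1z, h3z]
      · -- both nonzero : contradiction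
        exfalso
        obtain ⟨m, hm⟩ := k2 h2z
        obtain ⟨n, hn⟩ := k3 h3z
        have hmn : (m:ℝ) + n = 2 * T := by linear_combination -hm - hn
        refine ratlem (m - n) (m + n) (by push_cast; linarith) ?_
        push_cast
        linear_combination (1 - ε) * hm - (1 + ε) * hn
  · rintro (⟨w, hw, rfl⟩ | ⟨w, hw, rfl⟩ | ⟨w, hw, rfl⟩ | ⟨w, hw, rfl⟩)
    · refine ⟨1, one_pos, ?_⟩
      ext i
      fin_cases i <;>
        simp [katok, toC4, Complex.exp_two_pi_mul_I]
    · refine ⟨1, one_pos, ?_⟩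
      ext i
      fin_cases i <;>
        simp [katok, toC4, Complex.exp_two_pi_mul_I]
    · refine ⟨1/(1+ε), by positivity, ?_⟩
      have hne : (1 + ε : ℝ) ≠ 0 := by linarith
      ext i
      fin_cases i
      · simp [katok, toC4]
      · simp [katok, toC4]
      · show Complex.exp (2 * (Real.pi : ℂ) * Complex.I * ((1 + ε : ℝ) : ℂ)
            * ((1/(1+ε) : ℝ) : ℂ)) * w = w
        rw [exp_eq_one_of (1+ε) (1/(1+ε)) (by field_simp), one_mul]
      · simp [katok, toC4]
    · refine ⟨1/(1-ε), one_div_pos.mpr (by linarith), ?_⟩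
      have hne : (1 - ε : ℝ) ≠ 0 := by linarith
      ext i
      fin_cases i
      · simp [katok, toC4]
      · simp [katok, toC4]
      · simp [katok, toC4]
      · show Complex.exp (2 * (Real.pi : ℂ) * Complex.I * ((1 - ε : ℝ) : ℂ)
            * ((1/(1-ε) : ℝ) : ℂ)) * w = w
        rw [exp_eq_one_of (1-ε) (1/(1-ε)) (by field_simp), one_mul]

/-- For `ε ∈ (0,1)` irrational, a point of `Σ⁵` is periodic for the Katok flow
iff it lies on one of the four circles `C₁ ∪ C₂ ∪ C₃ ∪ C₄`. -/
theorem katok_periodic_points (ε : ℝ) (hε : ε ∈ Set.Ioo (0 : ℝ) 1) (hirr : Irrational ε) :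
    ∀ p ∈ Sigma5, (∃ T : ℝ, 0 < T ∧ katok ε T p = p) ↔ p ∈ circ1 ∪ circ2 ∪ circ3 ∪ circ4 := by
  intro p hp
  have h := katok_aux ε hε hirr p hp
  simpa [circ1, circ2, circ3, circ4, Set.mem_union, Set.mem_setOf_eq, or_assoc] using h
end
end

section
/- Let ε ∈ (0,1). The four circles C₁, C₂, C₃, C₄ are pairwise disjoint, and each is a single orbit of the Katok flow: for every i ∈ {1,2,3,4} and every p ∈ Cᵢ, the orbit {φ_t(p) : t ∈ ℝ} equals Cᵢ. Together with the characterization of periodic points this shows that for ε irrational the Katok flow on Σ⁵ has exactly four simple periodic orbits. -/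
noncomputable section

open Complex

/-- The four circles, indexed by `Fin 4`. -/
def circles : Fin 4 → Set C4 := ![circ1, circ2, circ3, circ4]

/-! ### Auxiliary lemmas -/

lemma sqrt2div2_ne_zero : Real.sqrt 2 / 2 ≠ 0 := by
  have := Real.sqrt_pos.mpr (by norm_num : (0:ℝ) < 2)
  positivity

lemma toC4_congr {v v' : Fin 4 → ℂ} (h : toC4 v = toC4 v') (j : Fin 4) : v j = v' j :=
  congrArg (fun p : C4 => p j) h

lemma toC4_eq {v v' : Fin 4 → ℂ} (h0 : v 0 = v' 0) (h1 : v 1 = v' 1) (h2 : v 2 = v' 2)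
    (h3 : v 3 = v' 3) : toC4 v = toC4 v' := by
  ext j; fin_cases j
  · exact h0
  · exact h1
  · exact h2
  · exact h3

lemma katok_coords (ε t : ℝ) (v : Fin 4 → ℂ) :
    katok ε t (toC4 v) = toC4
      ![Complex.exp (2 * (Real.pi : ℂ) * Complex.I * (t : ℂ)) * v 0,
        Complex.exp (2 * (Real.pi : ℂ) * Complex.I * (t : ℂ)) * v 1,
        Complex.exp (2 * (Real.pi : ℂ) * Complex.I * ((1 + ε : ℝ) : ℂ) * (t : ℂ)) * v 2,
        Complex.exp (2 * (Real.pi : ℂ) * Complex.I * ((1 - ε : ℝ) : ℂ) * (t : ℂ)) * v 3] := rfl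

lemma abs_exp2pi1 (t : ℝ) :
    ‖Complex.exp (2 * (Real.pi : ℂ) * Complex.I * (t : ℂ))‖ = 1 := by
  have h : (2 * (Real.pi : ℂ) * Complex.I * (t : ℂ)) = ((2 * Real.pi * t : ℝ) : ℂ) * Complex.I := by
    push_cast; ring
  rw [h, Complex.norm_exp_ofReal_mul_I]

lemma abs_exp2pi (c t : ℝ) :
    ‖Complex.exp (2 * (Real.pi : ℂ) * Complex.I * (c : ℂ) * (t : ℂ))‖ = 1 := by
  have h : (2 * (Real.pi : ℂ) * Complex.I * (c : ℂ) * (t : ℂ))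
      = ((2 * Real.pi * c * t : ℝ) : ℂ) * Complex.I := by push_cast; ring
  rw [h, Complex.norm_exp_ofReal_mul_I]

lemma exists_exp_eq (c : ℝ) (hc : c ≠ 0) (z : ℂ) (hz : ‖z‖ = 1) :
    ∃ t : ℝ, Complex.exp (2 * (Real.pi:ℂ) * Complex.I * (c:ℂ) * (t:ℂ)) = z := by
  refine ⟨z.arg / (2 * Real.pi * c), ?_⟩
  have hπ : (Real.pi:ℂ) ≠ 0 := by exact_mod_cast Real.pi_ne_zero
  have hc' : (c:ℂ) ≠ 0 := by exact_mod_cast hc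
  have h1 : (2 * (Real.pi:ℂ) * Complex.I * (c:ℂ) * ((z.arg / (2 * Real.pi * c) : ℝ):ℂ))
      = (z.arg:ℂ) * Complex.I := by
    push_cast; field_simp
  rw [h1]
  have := Complex.norm_mul_exp_arg_mul_I z
  rw [hz] at this
  simpa using this

lemma abs_one_ne_zero {z : ℂ} (h : ‖z‖ = 1) : z ≠ 0 := by
  intro h0; rw [h0, norm_zero] at h; exact one_ne_zero h.symm

lemma abs_sqrt2_ne_zero {z : ℂ} (h : ‖z‖ = Real.sqrt 2 / 2) : z ≠ 0 := by
  intro h0; rw [h0, norm_zero] at h; exact sqrt2div2_ne_zero h.symm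

lemma disj12 : Disjoint circ1 circ2 := by
  rw [Set.disjoint_left]
  rintro p ⟨w, hw, rfl⟩ ⟨w', hw', h⟩
  have h0 : w = w' := toC4_congr h 0
  have h1 : Complex.I * w = -(Complex.I * w') := toC4_congr h 1
  have hz : w = 0 := by
    subst h0
    have h2 : (2:ℂ) * (Complex.I * w) = 0 := by linear_combination h1
    have h3 : Complex.I * w = 0 := by
      simpa using h2
    simpa [Complex.I_ne_zero] using h3
  exact abs_sqrt2_ne_zero hw hz

lemma disj13 : Disjoint circ1 circ3 := by
  rw [Set.disjoint_left]
  rintro p ⟨w, hw, rfl⟩ ⟨w', hw', h⟩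
  have h2 : (0:ℂ) = w' := toC4_congr h 2
  exact abs_one_ne_zero hw' h2.symm

lemma disj14 : Disjoint circ1 circ4 := by
  rw [Set.disjoint_left]
  rintro p ⟨w, hw, rfl⟩ ⟨w', hw', h⟩
  have h3 : (0:ℂ) = w' := toC4_congr h 3
  exact abs_one_ne_zero hw' h3.symm

lemma disj23 : Disjoint circ2 circ3 := by
  rw [Set.disjoint_left]
  rintro p ⟨w, hw, rfl⟩ ⟨w', hw', h⟩
  have h2 : (0:ℂ) = w' := toC4_congr h 2
  exact abs_one_ne_zero hw' h2.symm

lemma disj24 : Disjoint circ2 circ4 := by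
  rw [Set.disjoint_left]
  rintro p ⟨w, hw, rfl⟩ ⟨w', hw', h⟩
  have h3 : (0:ℂ) = w' := toC4_congr h 3
  exact abs_one_ne_zero hw' h3.symm

lemma disj34 : Disjoint circ3 circ4 := by
  rw [Set.disjoint_left]
  rintro p ⟨w, hw, rfl⟩ ⟨w', hw', h⟩
  have h2 : w = (0:ℂ) := toC4_congr h 2
  exact abs_one_ne_zero hw h2

/-- For `ε ∈ (0,1)`, the circles `C₁, C₂, C₃, C₄` are pairwise disjoint and each is a
single orbit of the Katok flow: for any point of `Cᵢ`, its orbit equals `Cᵢ`. -/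
theorem katok_circles_disjoint_single_orbits (ε : ℝ) (hε : ε ∈ Set.Ioo (0 : ℝ) 1) :
    Pairwise (Function.onFun Disjoint circles) ∧
    (∀ i : Fin 4, ∀ p ∈ circles i,
      Set.range (fun t : ℝ => katok ε t p) = circles i) := by
  obtain ⟨hε0, hε1⟩ := hε
  constructor
  · intro i j hij
    fin_cases i <;> fin_cases j <;>
      first
        | exact absurd rfl hij
        | exact disj12 | exact disj13 | exact disj14
        | exact disj23 | exact disj24 | exact disj34
        | exact disj12.symm | exact disj13.symm | exact disj14.symm
        | exact disj23.symm | exact disj24.symm | exact disj34.symm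
  · intro i p hp
    fin_cases i
    · -- circ1
      obtain ⟨w, hw, rfl⟩ := hp
      have hwne : w ≠ 0 := abs_sqrt2_ne_zero hw
      ext q
      simp only [Set.mem_range]
      constructor
      · rintro ⟨t, rfl⟩
        refine ⟨Complex.exp (2 * (Real.pi : ℂ) * Complex.I * (t : ℂ)) * w, ?_, ?_⟩
        · rw [norm_mul, abs_exp2pi1, one_mul, hw]
        · rw [katok_coords]
          exact toC4_eq rfl (by simp only [Matrix.cons_val_zero, Matrix.cons_val_one, Matrix.cons_val_two, Matrix.cons_val_three, Matrix.head_cons, Matrix.tail_cons]; ring) (by simp) (by simp)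
      · rintro ⟨w', hw', rfl⟩
        obtain ⟨t, ht⟩ := exists_exp_eq 1 one_ne_zero (w'/w)
          (by rw [norm_div, hw', hw, div_self sqrt2div2_ne_zero])
        have he : Complex.exp (2 * (Real.pi : ℂ) * Complex.I * (t : ℂ)) * w = w' := by
          have h1 : Complex.exp (2 * (Real.pi : ℂ) * Complex.I * (t : ℂ))
              = Complex.exp (2 * (Real.pi : ℂ) * Complex.I * (((1:ℝ)):ℂ) * (t : ℂ)) := by
            norm_num
          rw [h1, ht, div_mul_cancel₀ _ hwne]
        refine ⟨t, ?_⟩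
        rw [katok_coords]
        exact toC4_eq he (by simp only [Matrix.cons_val_zero, Matrix.cons_val_one, Matrix.cons_val_two, Matrix.cons_val_three, Matrix.head_cons, Matrix.tail_cons]; rw [← he]; ring) (by simp) (by simp)
    · -- circ2
      obtain ⟨w, hw, rfl⟩ := hp
      have hwne : w ≠ 0 := abs_sqrt2_ne_zero hw
      ext q
      simp only [Set.mem_range]
      constructor
      · rintro ⟨t, rfl⟩
        refine ⟨Complex.exp (2 * (Real.pi : ℂ) * Complex.I * (t : ℂ)) * w, ?_, ?_⟩
        · rw [norm_mul, abs_exp2pi1, one_mul, hw]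
        · rw [katok_coords]
          exact toC4_eq rfl (by simp only [Matrix.cons_val_zero, Matrix.cons_val_one, Matrix.cons_val_two, Matrix.cons_val_three, Matrix.head_cons, Matrix.tail_cons]; ring) (by simp) (by simp)
      · rintro ⟨w', hw', rfl⟩
        obtain ⟨t, ht⟩ := exists_exp_eq 1 one_ne_zero (w'/w)
          (by rw [norm_div, hw', hw, div_self sqrt2div2_ne_zero])
        have he : Complex.exp (2 * (Real.pi : ℂ) * Complex.I * (t : ℂ)) * w = w' := by
          have h1 : Complex.exp (2 * (Real.pi : ℂ) * Complex.I * (t : ℂ))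
              = Complex.exp (2 * (Real.pi : ℂ) * Complex.I * (((1:ℝ)):ℂ) * (t : ℂ)) := by
            norm_num
          rw [h1, ht, div_mul_cancel₀ _ hwne]
        refine ⟨t, ?_⟩
        rw [katok_coords]
        exact toC4_eq he (by simp only [Matrix.cons_val_zero, Matrix.cons_val_one, Matrix.cons_val_two, Matrix.cons_val_three, Matrix.head_cons, Matrix.tail_cons]; rw [← he]; ring) (by simp) (by simp)
    · -- circ3
      obtain ⟨w, hw, rfl⟩ := hp
      have hwne : w ≠ 0 := abs_one_ne_zero hw
      ext q
      simp only [Set.mem_range]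
      constructor
      · rintro ⟨t, rfl⟩
        refine ⟨Complex.exp (2 * (Real.pi : ℂ) * Complex.I * ((1 + ε : ℝ) : ℂ) * (t : ℂ)) * w,
          ?_, ?_⟩
        · rw [norm_mul, abs_exp2pi, one_mul, hw]
        · rw [katok_coords]
          exact toC4_eq (by simp) (by simp) rfl (by simp)
      · rintro ⟨w', hw', rfl⟩
        obtain ⟨t, ht⟩ := exists_exp_eq (1 + ε) (by linarith) (w'/w)
          (by rw [norm_div, hw', hw, div_self one_ne_zero])
        refine ⟨t, ?_⟩
        rw [katok_coords]
        exact toC4_eq (by simp) (by simp) (by simp only [Matrix.cons_val_zero, Matrix.cons_val_one, Matrix.cons_val_two, Matrix.cons_val_three, Matrix.head_cons, Matrix.tail_cons]; rw [ht, div_mul_cancel₀ _ hwne]) (by simp)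
    · -- circ4
      obtain ⟨w, hw, rfl⟩ := hp
      have hwne : w ≠ 0 := abs_one_ne_zero hw
      ext q
      simp only [Set.mem_range]
      constructor
      · rintro ⟨t, rfl⟩
        refine ⟨Complex.exp (2 * (Real.pi : ℂ) * Complex.I * ((1 - ε : ℝ) : ℂ) * (t : ℂ)) * w,
          ?_, ?_⟩
        · rw [norm_mul, abs_exp2pi, one_mul, hw]
        · rw [katok_coords]
          exact toC4_eq (by simp) (by simp) (by simp) rfl
      · rintro ⟨w', hw', rfl⟩
        obtain ⟨t, ht⟩ := exists_exp_eq (1 - ε) (by intro h; linarith [sub_eq_zero.mp h]) (w'/w)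
          (by rw [norm_div, hw', hw, div_self one_ne_zero])
        refine ⟨t, ?_⟩
        rw [katok_coords]
        exact toC4_eq (by simp) (by simp) (by simp) (by simp only [Matrix.cons_val_zero, Matrix.cons_val_one, Matrix.cons_val_two, Matrix.cons_val_three, Matrix.head_cons, Matrix.tail_cons]; rw [ht, div_mul_cancel₀ _ hwne])
end
end

section
/- Let ε ∈ (0,1). The fixed point set of the time-one map of the Katok flow on Σ⁵ is exactly C₁ ∪ C₂: {p ∈ Σ⁵ : φ₁(p) = p} = C₁ ∪ C₂. In particular φ₁ has no fixed points in the binding Σ⁵ ∩ {w₀ = 0}, and for every θ ∈ ℝ the page {p ∈ Σ⁵ : p₀ = r e^{iθ} for some r > 0} contains exactly two fixed points of φ₁, namely ((√2/2) e^{iθ}, ± i (√2/2) e^{iθ}, 0, 0). -/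
noncomputable section

open Complex

/-- The fixed point `((√2/2) e^{iθ}, i (√2/2) e^{iθ}, 0, 0)` on the `θ`-page. -/
def fixPtPlus (θ : ℝ) : C4 := toC4
  ![((Real.sqrt 2 / 2 : ℝ) : ℂ) * Complex.exp ((θ : ℂ) * Complex.I),
    Complex.I * (((Real.sqrt 2 / 2 : ℝ) : ℂ) * Complex.exp ((θ : ℂ) * Complex.I)), 0, 0]

/-- The fixed point `((√2/2) e^{iθ}, −i (√2/2) e^{iθ}, 0, 0)` on the `θ`-page. -/
def fixPtMinus (θ : ℝ) : C4 := toC4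
  ![((Real.sqrt 2 / 2 : ℝ) : ℂ) * Complex.exp ((θ : ℂ) * Complex.I),
    -(Complex.I * (((Real.sqrt 2 / 2 : ℝ) : ℂ) * Complex.exp ((θ : ℂ) * Complex.I))), 0, 0]

lemma toC4_apply (v : Fin 4 → ℂ) (i : Fin 4) : toC4 v i = v i := rfl

lemma exp_ne_one_aux (c : ℝ) (hc0 : 0 < c) (hc1 : c < 1) :
    Complex.exp (2 * (Real.pi : ℂ) * Complex.I * (c : ℂ)) ≠ 1 := by
  intro h
  rw [Complex.exp_eq_one_iff] at h
  obtain ⟨n, hn⟩ := h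
  have hI : (2 * (Real.pi : ℂ) * Complex.I) ≠ 0 := by
    intro hc
    rcases mul_eq_zero.mp hc with hc | hc
    · rcases mul_eq_zero.mp hc with hc | hc
      · norm_num at hc
      · exact Real.pi_ne_zero (by exact_mod_cast hc)
    · exact Complex.I_ne_zero hc
  have : (c : ℂ) = (n : ℂ) :=
    mul_left_cancel₀ hI (by linear_combination hn)
  have hcn : c = (n : ℝ) := by exact_mod_cast this
  rcases lt_or_ge n 1 with h | h
  · have : (n:ℝ) ≤ 0 := by exact_mod_cast Int.lt_add_one_iff.mp (by omega : n < 0 + 1)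
    linarith [hcn ▸ hc0]
  · have : (1:ℝ) ≤ (n:ℝ) := by exact_mod_cast h
    linarith [hcn ▸ hc1]

lemma fix_iff (ε : ℝ) (hε : ε ∈ Set.Ioo (0:ℝ) 1) (p : C4) :
    katok ε 1 p = p ↔ p 2 = 0 ∧ p 3 = 0 := by
  constructor
  · intro h
    have h2 := congrArg (· 2) h
    have h3 := congrArg (· 3) h
    simp only [katok, toC4_apply, Matrix.cons_val_zero, Matrix.cons_val_one, Matrix.head_cons,
      Matrix.cons_val_two, Matrix.cons_val_three, Matrix.tail_cons, Matrix.head_fin_const,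
      Complex.ofReal_one, mul_one] at h2 h3
    constructor
    · by_contra hp
      apply exp_ne_one_aux ε hε.1 hε.2
      have : Complex.exp (2*(Real.pi:ℂ)*Complex.I*((1+ε:ℝ):ℂ)) = 1 :=
        mul_right_cancel₀ hp (by rw [h2, one_mul])
      rw [← this]
      push_cast
      rw [mul_add, Complex.exp_add]
      rw [show (2*(Real.pi:ℂ)*Complex.I*1) = 2*(Real.pi:ℂ)*Complex.I by ring,
        Complex.exp_two_pi_mul_I, one_mul]
    · by_contra hp
      have h1 : Complex.exp (2*(Real.pi:ℂ)*Complex.I*((1-ε:ℝ):ℂ)) = 1 :=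
        mul_right_cancel₀ hp (by rw [h3, one_mul])
      apply exp_ne_one_aux ε hε.1 hε.2
      have : Complex.exp (2*(Real.pi:ℂ)*Complex.I*((1-ε:ℝ):ℂ)) *
          Complex.exp (2*(Real.pi:ℂ)*Complex.I*(ε:ℂ)) = 1 := by
        rw [← Complex.exp_add]
        push_cast
        rw [show 2*(Real.pi:ℂ)*Complex.I*(1-ε) + 2*Real.pi*Complex.I*ε
            = 2*(Real.pi:ℂ)*Complex.I by ring, Complex.exp_two_pi_mul_I]
      rw [h1, one_mul] at this
      exact this
  · rintro ⟨h2, h3⟩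
    refine PiLp.ext fun i => ?_
    fin_cases i <;>
      simp [katok, toC4_apply, h2, h3, Complex.ofReal_one, mul_one,
        show (2*(Real.pi:ℂ)*Complex.I*1) = 2*(Real.pi:ℂ)*Complex.I by ring,
        Complex.exp_two_pi_mul_I]

lemma norm_eq_sqrt4 (p : C4) :
    ‖p‖ = Real.sqrt (‖p 0‖^2 + ‖p 1‖^2 +
      ‖p 2‖^2 + ‖p 3‖^2) := by
  rw [EuclideanSpace.norm_eq, Fin.sum_univ_four]

lemma sq_half_aux (z : ℂ) (h : ‖z‖ = Real.sqrt 2 / 2) :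
    ‖z‖ ^ 2 = 1/2 := by
  rw [h, div_pow, Real.sq_sqrt (by norm_num : (2:ℝ) ≥ 0)]; norm_num

lemma norm_circ_aux (w : ℂ) (hw : ‖w‖ = Real.sqrt 2 / 2) (s : ℂ)
    (hs : ‖s‖ = 1) :
    ‖toC4 ![w, s * w, 0, 0]‖ = 1 := by
  rw [norm_eq_sqrt4]
  simp only [toC4_apply, Matrix.cons_val_zero, Matrix.cons_val_one, Matrix.head_cons,
    Matrix.cons_val_two, Matrix.cons_val_three, Matrix.tail_cons, norm_zero, norm_mul, hs, one_mul]
  rw [sq_half_aux w hw]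
  norm_num

lemma part1_aux (p : C4) (hq : p 0 ^ 2 + p 1 ^ 2 - 2 * Complex.I * p 2 * p 3 = 0)
    (hn : ‖p‖ = 1) (h2 : p 2 = 0) (h3 : p 3 = 0) :
    (∃ w : ℂ, ‖w‖ = Real.sqrt 2 / 2 ∧ p = toC4 ![w, Complex.I * w, 0, 0]) ∨
    (∃ w : ℂ, ‖w‖ = Real.sqrt 2 / 2 ∧ p = toC4 ![w, -(Complex.I * w), 0, 0]) := by
  rw [h2, h3] at hq
  have hfac : (p 1 - Complex.I * p 0) * (p 1 + Complex.I * p 0) = 0 := by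
    linear_combination hq - Complex.I_sq * (p 0)^2
  have habs : ‖p 0‖ = Real.sqrt 2 / 2 := by
    have h1 : ‖p 1‖ = ‖p 0‖ := by
      rcases mul_eq_zero.mp hfac with h | h
      · rw [sub_eq_zero] at h; rw [h]; simp
      · have : p 1 = -(Complex.I * p 0) := by linear_combination h
        rw [this]; simp
    rw [norm_eq_sqrt4, h2, h3, h1] at hn
    have h0 : ‖p 0‖ ^ 2 = 1/2 := by
      have := (Real.sqrt_eq_one.mp (by simpa using hn))
      nlinarith
    have : ‖p 0‖ = Real.sqrt (1/2) := by
      rw [← h0, Real.sqrt_sq (norm_nonneg _)]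
    rw [this, show (1:ℝ)/2 = 2/4 by norm_num, Real.sqrt_div (by norm_num) 4,
      show Real.sqrt 4 = 2 by
        rw [show (4:ℝ) = 2^2 by norm_num, Real.sqrt_sq (by norm_num)]]
  rcases mul_eq_zero.mp hfac with h | h
  · left
    exact ⟨p 0, habs, by
      refine PiLp.ext fun i => ?_; fin_cases i <;>
        simp [toC4_apply, h2, h3, sub_eq_zero.mp h]⟩
  · right
    exact ⟨p 0, habs, by
      refine PiLp.ext fun i => ?_; fin_cases i <;>
        simp [toC4_apply, h2, h3, show p 1 = -(Complex.I * p 0) by linear_combination h]⟩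

lemma main1 (ε : ℝ) (hε : ε ∈ Set.Ioo (0 : ℝ) 1) :
    {p ∈ Sigma5 | katok ε 1 p = p} = circ1 ∪ circ2 := by
  ext p
  simp only [Set.mem_setOf_eq, Set.mem_union, circ1, circ2, Sigma5]
  constructor
  · rintro ⟨⟨hq, hn⟩, hfix⟩
    obtain ⟨h2, h3⟩ := (fix_iff ε hε p).mp hfix
    exact part1_aux p hq hn h2 h3
  · rintro (⟨w, hw, rfl⟩ | ⟨w, hw, rfl⟩)
    · refine ⟨⟨?_, ?_⟩, (fix_iff ε hε _).mpr ⟨rfl, rfl⟩⟩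
      · simp only [toC4_apply, Matrix.cons_val_zero, Matrix.cons_val_one, Matrix.head_cons,
          Matrix.cons_val_two, Matrix.cons_val_three, Matrix.tail_cons]
        linear_combination w^2 * Complex.I_sq
      · exact norm_circ_aux w hw Complex.I (by simp)
    · refine ⟨⟨?_, ?_⟩, (fix_iff ε hε _).mpr ⟨rfl, rfl⟩⟩
      · simp only [toC4_apply, Matrix.cons_val_zero, Matrix.cons_val_one, Matrix.head_cons,
          Matrix.cons_val_two, Matrix.cons_val_three, Matrix.tail_cons]
        linear_combination w^2 * Complex.I_sq
      · rw [show toC4 ![w, -(Complex.I * w), 0, 0] = toC4 ![w, (-Complex.I) * w, 0, 0] by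
          rw [neg_mul]]
        exact norm_circ_aux w hw (-Complex.I) (by simp)

/-- For `ε ∈ (0,1)`, the fixed point set of the time-one map of the Katok flow on `Σ⁵` is
exactly `C₁ ∪ C₂`; in particular there are no fixed points in the binding `{w₀ = 0} ∩ Σ⁵`,
and each page `{arg w₀ = θ}` contains exactly the two fixed points
`((√2/2) e^{iθ}, ± i (√2/2) e^{iθ}, 0, 0)`. -/
theorem katok_time_one_fixed_points (ε : ℝ) (hε : ε ∈ Set.Ioo (0 : ℝ) 1) :
    ({p ∈ Sigma5 | katok ε 1 p = p} = circ1 ∪ circ2) ∧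
    (∀ p ∈ Sigma5, p 0 = 0 → katok ε 1 p ≠ p) ∧
    (∀ θ : ℝ,
      {p ∈ Sigma5 | (∃ r : ℝ, 0 < r ∧ p 0 = (r : ℂ) * Complex.exp ((θ : ℂ) * Complex.I)) ∧
        katok ε 1 p = p} = {fixPtPlus θ, fixPtMinus θ}) := by
  have hpos : (0:ℝ) < Real.sqrt 2 / 2 := by positivity
  refine ⟨main1 ε hε, ?_, ?_⟩
  · intro p hp h0 hfix
    have hmem : p ∈ circ1 ∪ circ2 := by
      rw [← main1 ε hε]; exact ⟨hp, hfix⟩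
    rcases hmem with ⟨w, hw, rfl⟩ | ⟨w, hw, rfl⟩ <;>
    · have : w = 0 := h0
      rw [this] at hw
      simp at hw
      linarith [hw ▸ hpos]
  · intro θ
    ext p
    simp only [Set.mem_setOf_eq, Set.mem_insert_iff, Set.mem_singleton_iff]
    constructor
    · rintro ⟨hp, ⟨r, hr, h0⟩, hfix⟩
      have hmem : p ∈ circ1 ∪ circ2 := by
        rw [← main1 ε hε]; exact ⟨hp, hfix⟩
      have hrval : ∀ w : ℂ, p 0 = w → ‖w‖ = Real.sqrt 2 / 2 →
          w = ((Real.sqrt 2 / 2 : ℝ) : ℂ) * Complex.exp ((θ:ℂ) * Complex.I) := by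
        intro w hpw hw
        have hw0 : w = (r:ℂ) * Complex.exp ((θ:ℂ) * Complex.I) := hpw ▸ h0
        have : ‖w‖ = r := by
          rw [hw0, norm_mul, Complex.norm_exp_ofReal_mul_I, mul_one, Complex.norm_real, Real.norm_eq_abs,
            abs_of_pos hr]
        rw [hw0, ← hw, this]
      rcases hmem with ⟨w, hw, rfl⟩ | ⟨w, hw, rfl⟩
      · left
        have := hrval w rfl hw
        rw [fixPtPlus, this]
      · right
        have := hrval w rfl hw
        rw [fixPtMinus, this]
    · have habs : ‖(((Real.sqrt 2 / 2 : ℝ) : ℂ) * Complex.exp ((θ:ℂ) * Complex.I))‖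
          = Real.sqrt 2 / 2 := by
        rw [norm_mul, Complex.norm_exp_ofReal_mul_I, mul_one, Complex.norm_real, Real.norm_eq_abs,
          abs_of_pos hpos]
      rintro (rfl | rfl)
      · have hmem : fixPtPlus θ ∈ circ1 ∪ circ2 :=
          Or.inl ⟨_, habs, rfl⟩
        rw [← main1 ε hε] at hmem
        exact ⟨hmem.1, ⟨Real.sqrt 2 / 2, hpos, rfl⟩, hmem.2⟩
      · have hmem : fixPtMinus θ ∈ circ1 ∪ circ2 :=
          Or.inr ⟨_, habs, rfl⟩
        rw [← main1 ε hε] at hmem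
        exact ⟨hmem.1, ⟨Real.sqrt 2 / 2, hpos, rfl⟩, hmem.2⟩
end
end
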